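/- Let D ⊆ Δₙ = {εᵢ − εⱼ | 1 ≤ i < j ≤ n} be a closed set of positive roots (i.e., α, β ∈ D and α + β ∈ Δₙ imply α + β ∈ D). Let D^♯ be the set of roots of D expressible as a sum of two roots of D, and let g_D ⊆ gl_n be the span of the matrix units E_{ij} for εᵢ − εⱼ ∈ D. Then [g_D, g_D] = g_{D^♯}, where the bracket is the span of all commutators XY − YX with X, Y ∈ g_D. -/

import Mathlib

/-- For a closed set `D` of positive roots (positions `(i,j)`, `i < j`) and `g_D` the span
of the corresponding matrix units, `[g_D, g_D] = g_{D♯}`, where `D♯` is the set of roots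
of `D` expressible as a sum of two roots of `D`. -/
theorem stmt9 {F : Type*} [Field F] (n : ℕ) (D : Set (Fin n × Fin n))
    (hDpos : ∀ p ∈ D, p.1 < p.2)
    (hDclosed : ∀ i j k : Fin n, (i, j) ∈ D → (j, k) ∈ D → (i, k) ∈ D)
    (gD : Submodule F (Matrix (Fin n) (Fin n) F))
    (hgD : ∀ M : Matrix (Fin n) (Fin n) F, M ∈ gD ↔ ∀ i j : Fin n, (i, j) ∉ D → M i j = 0)
    (gSharp : Submodule F (Matrix (Fin n) (Fin n) F))
    (hgSharp : ∀ M : Matrix (Fin n) (Fin n) F, M ∈ gSharp ↔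
      ∀ i k : Fin n, ¬ (∃ j : Fin n, (i, j) ∈ D ∧ (j, k) ∈ D) → M i k = 0) :
    Submodule.span F {M : Matrix (Fin n) (Fin n) F |
        ∃ X ∈ gD, ∃ Y ∈ gD, M = X * Y - Y * X} = gSharp := by
  apply le_antisymm
  · rw [Submodule.span_le]
    rintro M ⟨X, hX, Y, hY, rfl⟩
    rw [SetLike.mem_coe, hgSharp]
    intro i k h
    have hz : ∀ A B : Matrix (Fin n) (Fin n) F, A ∈ gD → B ∈ gD →
        (A * B) i k = 0 := by
      intro A B hA hB
      rw [Matrix.mul_apply]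
      apply Finset.sum_eq_zero
      intro j _
      by_cases hij : (i, j) ∈ D
      · have hjk : (j, k) ∉ D := fun hjk => h ⟨j, hij, hjk⟩
        rw [(hgD B).mp hB j k hjk, mul_zero]
      · rw [(hgD A).mp hA i j hij, zero_mul]
    simp [Matrix.sub_apply, hz X Y hX hY, hz Y X hY hX]
  · intro M hM
    rw [hgSharp] at hM
    rw [Matrix.matrix_eq_sum_single M]
    apply Submodule.sum_mem
    intro i _
    apply Submodule.sum_mem
    intro k _
    by_cases h : ∃ j : Fin n, (i, j) ∈ D ∧ (j, k) ∈ D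
    · obtain ⟨j, h1, h2⟩ := h
      have hEij : Matrix.single i j (1 : F) ∈ gD := by
        rw [hgD]
        intro a b hab
        rw [Matrix.single]
        simp only [Matrix.of_apply, ite_eq_right_iff]
        rintro ⟨rfl, rfl⟩
        exact absurd h1 hab
      have hEjk : Matrix.single j k (1 : F) ∈ gD := by
        rw [hgD]
        intro a b hab
        rw [Matrix.single]
        simp only [Matrix.of_apply, ite_eq_right_iff]
        rintro ⟨rfl, rfl⟩
        exact absurd h2 hab
      have hki : k ≠ i := by
        have h3 := hDpos _ h1
        have h4 := hDpos _ h2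
        exact fun e => absurd (e ▸ h4 : (j : Fin n) < i) (not_lt.mpr h3.le)
      have key : Matrix.single i k (M i k) =
          (M i k) • (Matrix.single i j (1 : F) * Matrix.single j k 1
            - Matrix.single j k 1 * Matrix.single i j 1) := by
        rw [Matrix.single_mul_single_same, Matrix.single_mul_single_of_ne (h := hki),
          sub_zero, Matrix.smul_single, smul_eq_mul]
        ring_nf
      rw [key]
      apply Submodule.smul_mem
      apply Submodule.subset_span
      exact ⟨_, hEij, _, hEjk, rfl⟩
    · rw [hM i k h, Matrix.single_zero]
      exact Submodule.zero_mem _
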